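/- arXiv:2504.06745 — 4 statements merged into one kernel-verified Lean document; each statement's English description precedes it below -/
import Mathlib

section
/- Let K ⊆ ℂⁿ be compact, w a continuous weight, and (v,μ) a vector measure pair on K with ‖v(x)‖ ≤ 1 for every x ∈ K (and ‖v(x)‖ = 1 μ-a.e.). Then for every r ∈ ℕ: Z_r^{v,μ,w} ≤ μ(K)^N · (δ^{w,r}(K,U))^{2sℓ_r}, where N = s·m_r. -/
open MeasureTheory Filter Topology
open scoped BigOperators ComplexConjugate ENNReal NNReal

noncomputable section

/-- Points of ℂⁿ. -/
abbrev Pt (n : ℕ) := Fin n → ℂ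

/-- The Hermitian space U ≅ ℂˢ with its standard Hermitian inner product. -/
abbrev Vec (s : ℕ) := EuclideanSpace ℂ (Fin s)

/-- The monomial x^β. -/
def mono {n : ℕ} (β : Fin n → ℕ) (x : Pt n) : ℂ := ∏ i, x i ^ β i

/-- m_r := C(n+r, n), the dimension of the space of polynomials of degree ≤ r in n variables. -/
def mr (n r : ℕ) : ℕ := (n + r).choose n

/-- ℓ_r := Σ_{k=1}^{r} k (m_k − m_{k−1}). -/
def lr (n r : ℕ) : ℕ := ∑ k ∈ Finset.Icc 1 r, k * (mr n k - mr n (k - 1))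

/-- `B` enumerates the multi-indices β ∈ ℕⁿ with |β| ≤ r. -/
def IsEnum {n : ℕ} (r m : ℕ) (B : Fin m → Fin n → ℕ) : Prop :=
  Function.Injective B ∧ (∀ l, ∑ j, B l j ≤ r) ∧
    ∀ γ : Fin n → ℕ, (∑ j, γ j) ≤ r → ∃ l, B l = γ

/-- The basis polynomial q_{(l,i)}(x) := x^{β(l)} e_i of 𝒫_r(U). -/
def qb {n s m : ℕ} (B : Fin m → Fin n → ℕ) (j : Fin m × Fin s) (x : Pt n) : Vec s :=
  EuclideanSpace.single j.2 (mono (B j.1) x)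

/-- f ⊙ w^r : componentwise multiplication by the r-th power of the weight w. -/
def wodot {n s : ℕ} (w : Pt n → Fin s → ℝ) (r : ℕ) (f : Pt n → Vec s) : Pt n → Vec s :=
  fun x => WithLp.toLp 2 (fun i => ((w x i : ℂ) ^ r) * f x i)

/-- f ⊙ ω : componentwise multiplication by a real vector function ω. -/
def modot {n s : ℕ} (ω : Pt n → Fin s → ℝ) (f : Pt n → Vec s) : Pt n → Vec s :=
  fun x => WithLp.toLp 2 (fun i => ((ω x i : ℂ)) * f x i)

/-- The ℂˢ-valued polynomial of degree ≤ r with coefficients c (in the basis qb). -/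
def poly {n s m : ℕ} (B : Fin m → Fin n → ℕ) (c : Fin m × Fin s → ℂ) (x : Pt n) : Vec s :=
  WithLp.toLp 2 (fun i => ∑ l, c (l, i) * mono (B l) x)

/-- A scalar polynomial of degree ≤ r with coefficients c. -/
def spoly {n m : ℕ} (B : Fin m → Fin n → ℕ) (c : Fin m → ℂ) (x : Pt n) : ℂ :=
  ∑ l, c l * mono (B l) x

/-- The rank-one semimetric g_x(a,b) := conj(⟨v(x),a⟩)·⟨v(x),b⟩. -/
def gval {n s : ℕ} (v : Pt n → Vec s) (x : Pt n) (a b : Vec s) : ℂ :=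
  conj (inner ℂ (v x) a : ℂ) * (inner ℂ (v x) b : ℂ)

lemma mono_continuous {n : ℕ} (β : Fin n → ℕ) : Continuous (mono β) := by
  unfold mono
  exact continuous_finset_prod _ (fun i _ => (continuous_apply i).pow _)

/-- q_j ⊙ w^r as a continuous map on K, an element of the Banach space C(K, ℂˢ). -/
def qwCont {n s m : ℕ} (K : Set (Pt n)) (w : Pt n → Fin s → ℝ)
    (hw : ContinuousOn (fun x => w x) K) (B : Fin m → Fin n → ℕ) (r : ℕ)
    (j : Fin m × Fin s) : C(↥K, Vec s) :=
  ⟨fun x => wodot w r (qb B j) x.1, by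
    unfold wodot
    refine (PiLp.continuous_toLp 2 _).comp ?_
    apply continuous_pi
    intro i
    unfold qb
    have hwc : Continuous fun x : ↥K => w x.1 i := by
      have := hw.comp_continuous continuous_subtype_val (fun x : ↥K => x.2)
      exact (continuous_apply i).comp this
    have h1 : Continuous fun x : ↥K => ((w x.1 i : ℂ)) :=
      Complex.continuous_ofReal.comp hwc
    have h2 : Continuous fun x : ↥K =>
        (EuclideanSpace.single j.2 (mono (B j.1) x.1) : Vec s) i := by
      simp only [EuclideanSpace.single_apply]
      by_cases h : i = j.2
      · simp only [h, if_true]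
        exact (mono_continuous (B j.1)).comp continuous_subtype_val
      · simp only [h, if_false]
        exact continuous_const
    exact (h1.pow r).mul h2⟩

/-- The quantity maximized in the definition of δ^{w,r}(K,U) : the supremum of
|det[T_i (q_j ⊙ w^r)]| over N-tuples of continuous linear functionals on C(K,ℂˢ)
of operator norm at most 1. -/
def deltaVBase {n : ℕ} (s : ℕ) (K : Set (Pt n)) [CompactSpace ↥K]
    (w : Pt n → Fin s → ℝ) (hw : ContinuousOn (fun x => w x) K)
    (r : ℕ) (B : Fin (mr n r) → Fin n → ℕ) : ℝ :=
  sSup {t : ℝ | ∃ T : (Fin (mr n r) × Fin s) → (C(↥K, Vec s) →L[ℂ] ℂ),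
    (∀ i, ‖T i‖ ≤ 1) ∧
    t = ‖(Matrix.det (Matrix.of fun i j => T i (qwCont K w hw B r j)))‖}

/-- The r-th weighted transfinite diameter δ^{w,r}(K,U). -/
def deltaV {n : ℕ} (s : ℕ) (K : Set (Pt n)) [CompactSpace ↥K]
    (w : Pt n → Fin s → ℝ) (hw : ContinuousOn (fun x => w x) K)
    (r : ℕ) (B : Fin (mr n r) → Fin n → ℕ) : ℝ :=
  (deltaVBase s K w hw r B) ^ (((s * lr n r : ℕ) : ℝ)⁻¹)

/-- The free energy Z_r^{v,μ,w}. -/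
def Zfun {n : ℕ} (s : ℕ) (K : Set (Pt n)) (μ : Measure (Pt n)) [IsFiniteMeasure μ]
    (v : Pt n → Vec s)
    (w : Pt n → Fin s → ℝ) (r m : ℕ) (B : Fin m → Fin n → ℕ) : ℂ :=
  ∫ x : (Fin m × Fin s) → Pt n,
    (∑ σ : Equiv.Perm (Fin m × Fin s), ∑ τ : Equiv.Perm (Fin m × Fin s),
      ((Equiv.Perm.sign σ : ℤ) : ℂ) * ((Equiv.Perm.sign τ : ℤ) : ℂ) *
      ∏ j, gval v (x j) (wodot w r (qb B (σ j)) (x j)) (wodot w r (qb B (τ j)) (x j)))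
    ∂(Measure.pi fun _ => μ.restrict K)


section Helpers

open scoped ComplexOrder

lemma trace_eq_sum_eigs' {ι : Type*} [Fintype ι] [DecidableEq ι] {A : Matrix ι ι ℂ}
    (hH : A.IsHermitian) : A.trace = ∑ i, ((hH.eigenvalues i : ℝ) : ℂ) := by
  exact hH.trace_eq_sum_eigenvalues

lemma det_abs_le_one_of_posSemidef' {ι : Type*} [Fintype ι] [DecidableEq ι] {A : Matrix ι ι ℂ}
    (hA : A.PosSemidef) (hd : ∀ i, (A i i).re ≤ 1) : ‖A.det‖ ≤ 1 := by
  have hH := hA.1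
  have hnn : ∀ i, 0 ≤ hH.eigenvalues i := hA.eigenvalues_nonneg
  rw [hH.det_eq_prod_eigenvalues, ← RCLike.ofReal_prod,
    RCLike.norm_ofReal, abs_of_nonneg (Finset.prod_nonneg fun i _ => hnn i)]
  have htr : ∑ i, hH.eigenvalues i ≤ (Fintype.card ι : ℝ) := by
    have h1 : (A.trace).re = ∑ i, hH.eigenvalues i := by
      rw [trace_eq_sum_eigs' hH]; rw [Complex.re_sum]; simp
    have h2 : (A.trace).re ≤ (Fintype.card ι : ℝ) := by
      rw [Matrix.trace, Complex.re_sum]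
      calc ∑ i, (A.diag i).re ≤ ∑ _i : ι, (1:ℝ) := Finset.sum_le_sum fun i _ => hd i
        _ = (Fintype.card ι : ℝ) := by simp
    linarith [h1 ▸ h2]
  rcases Nat.eq_zero_or_pos (Fintype.card ι) with hc | hc
  · haveI := Fintype.card_eq_zero_iff.mp hc
    simp [Finset.univ_eq_empty]
  · set c : ℝ := (Fintype.card ι : ℝ) with hcdef
    have hcpos : (0:ℝ) < c := by rw [hcdef]; exact_mod_cast hc
    have hgm := Real.geom_mean_le_arith_mean_weighted Finset.univ (fun _ => c⁻¹)
      (fun i => hH.eigenvalues i) (fun _ _ => by positivity)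
      (by simp [Finset.sum_const, hcdef]; field_simp) (fun i _ => hnn i)
    have hL : (∏ i, hH.eigenvalues i) ^ (c⁻¹) = ∏ i, hH.eigenvalues i ^ (c⁻¹) :=
      (Real.finset_prod_rpow Finset.univ _ (fun i _ => hnn i) _).symm
    have hR : ∑ i, c⁻¹ * hH.eigenvalues i ≤ 1 := by
      rw [← Finset.mul_sum]
      rw [inv_mul_le_iff₀ hcpos]
      linarith
    have hkey : (∏ i, hH.eigenvalues i) ^ (c⁻¹) ≤ 1 := by
      rw [hL]; exact le_trans hgm hR
    by_contra hcon
    push_neg at hcon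
    have : 1 < (∏ i, hH.eigenvalues i) ^ (c⁻¹) :=
      (Real.one_lt_rpow_iff_of_pos (lt_trans one_pos hcon)).mpr
        (Or.inl ⟨hcon, by positivity⟩)
    linarith

lemma det_abs_le_one_of_rows {ι : Type*} [Fintype ι] [DecidableEq ι] (A : Matrix ι ι ℂ)
    (hrow : ∀ i, ∑ k, Complex.normSq (A i k) ≤ 1) : ‖A.det‖ ≤ 1 := by
  have habs_star : ∀ z : ℂ, ‖star z‖ = ‖z‖ :=
    fun z => Complex.norm_conj z
  have h2 : ‖A.det‖ ^ 2 = ‖(A * A.conjTranspose).det‖ := by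
    rw [Matrix.det_mul, Matrix.det_conjTranspose, norm_mul, habs_star, ← sq]
  have h3 : ‖(A * A.conjTranspose).det‖ ≤ 1 := by
    refine det_abs_le_one_of_posSemidef'
      (Matrix.posSemidef_self_mul_conjTranspose A) fun i => ?_
    have hre : ((A * A.conjTranspose) i i).re = ∑ k, Complex.normSq (A i k) := by
      simp only [Matrix.mul_apply, Matrix.conjTranspose_apply, RCLike.star_def,
        Complex.re_sum]
      exact Finset.sum_congr rfl fun k _ => by rw [Complex.mul_conj, Complex.ofReal_re]
    rw [hre]; exact hrow i
  have h4 : ‖A.det‖ ^ 2 ≤ 1 := h2 ▸ h3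
  nlinarith [norm_nonneg A.det]

end Helpers

/-- Z_r^{v,μ,w} ≤ μ(K)^N · (δ^{w,r}(K,U))^{2sℓ_r}. -/
theorem stmt8 {n s : ℕ} (hn : 0 < n) (hs : 0 < s)
    (K : Set (Pt n)) [CompactSpace ↥K] (hK : IsCompact K)
    (μ : Measure (Pt n)) [IsFiniteMeasure μ]
    (v : Pt n → Vec s) (hv : ∀ i, Measurable fun y => v y i) (hv1 : ∀ᵐ y ∂(μ.restrict K), ‖v y‖ = 1)
    (hvle : ∀ y ∈ K, ‖v y‖ ≤ 1)
    (w : Pt n → Fin s → ℝ) (hw : ContinuousOn (fun y => w y) K)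
    (hwpos : ∀ y ∈ K, ∀ i, 0 < w y i)
    (r : ℕ) (B : Fin (mr n r) → Fin n → ℕ) (hB : IsEnum r (mr n r) B) :
    ‖(Zfun s K μ v w r (mr n r) B)‖ ≤
      (μ K).toReal ^ (s * mr n r) * (deltaV s K w hw r B) ^ (2 * s * lr n r) := by
  classical
  set d : ((Fin (mr n r) × Fin s) → Pt n) → ℂ := fun x =>
    Matrix.det (Matrix.of fun j k : Fin (mr n r) × Fin s =>
      (inner ℂ (v (x j)) (wodot w r (qb B k) (x j)) : ℂ)) with hd
  -- Step 1: the integrand factorizes as conj (d x) * d x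
  have h1 : ∀ x : (Fin (mr n r) × Fin s) → Pt n,
      (∑ σ : Equiv.Perm (Fin (mr n r) × Fin s), ∑ τ : Equiv.Perm (Fin (mr n r) × Fin s),
        ((Equiv.Perm.sign σ : ℤ) : ℂ) * ((Equiv.Perm.sign τ : ℤ) : ℂ) *
        ∏ j, gval v (x j) (wodot w r (qb B (σ j)) (x j)) (wodot w r (qb B (τ j)) (x j)))
      = conj (d x) * d x := by
    intro x
    have hdx : d x = ∑ τ : Equiv.Perm (Fin (mr n r) × Fin s),
        ((Equiv.Perm.sign τ : ℤ) : ℂ) *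
        ∏ j, (inner ℂ (v (x j)) (wodot w r (qb B (τ j)) (x j)) : ℂ) := by
      simp only [hd]
      rw [← Matrix.det_transpose, Matrix.det_apply]
      refine Finset.sum_congr rfl fun τ _ => ?_
      rw [Units.smul_def, zsmul_eq_mul]
      rfl
    have hcdx : conj (d x) = ∑ σ : Equiv.Perm (Fin (mr n r) × Fin s),
        ((Equiv.Perm.sign σ : ℤ) : ℂ) *
        ∏ j, conj (inner ℂ (v (x j)) (wodot w r (qb B (σ j)) (x j)) : ℂ) := by
      rw [hdx, map_sum]
      refine Finset.sum_congr rfl fun σ _ => ?_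
      rw [map_mul, map_prod, map_intCast]
    rw [hcdx, hdx, Finset.sum_mul_sum]
    refine Finset.sum_congr rfl fun σ _ => Finset.sum_congr rfl fun τ _ => ?_
    unfold gval
    rw [Finset.prod_mul_distrib]
    ring
  -- The quantity deltaVBase and its basic properties
  have hbdd : BddAbove {t : ℝ | ∃ T : (Fin (mr n r) × Fin s) → (C(↥K, Vec s) →L[ℂ] ℂ),
      (∀ i, ‖T i‖ ≤ 1) ∧
      t = ‖(Matrix.det (Matrix.of fun i j => T i (qwCont K w hw B r j)))‖} := by
    refine ⟨∑ _σ : Equiv.Perm (Fin (mr n r) × Fin s), ∏ j, ‖qwCont K w hw B r j‖, ?_⟩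
    rintro t ⟨T, hT, rfl⟩
    rw [Matrix.det_apply]
    refine le_trans (norm_sum_le _ _) (Finset.sum_le_sum fun σ _ => ?_)
    rw [Units.smul_def, zsmul_eq_mul, norm_mul, norm_prod]
    have habs1 : ‖((Equiv.Perm.sign σ : ℤ) : ℂ)‖ = 1 := by
      rcases Int.units_eq_one_or (Equiv.Perm.sign σ) with h | h <;> simp [h]
    rw [habs1, one_mul]
    refine Finset.prod_le_prod (fun j _ => norm_nonneg _) fun j _ => ?_
    calc ‖(Matrix.of (fun i j => T i (qwCont K w hw B r j)) (σ j) j)‖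
        = ‖T (σ j) (qwCont K w hw B r j)‖ := rfl
      _ ≤ ‖T (σ j)‖ * ‖qwCont K w hw B r j‖ := ContinuousLinearMap.le_opNorm _ _
      _ ≤ 1 * ‖qwCont K w hw B r j‖ :=
          mul_le_mul_of_nonneg_right (hT _) (norm_nonneg _)
      _ = _ := one_mul _
  have hD0 : 0 ≤ deltaVBase s K w hw r B :=
    le_trans (norm_nonneg _) (le_csSup hbdd
      ⟨fun _ => 0, fun i =>
        le_trans (le_of_eq ContinuousLinearMap.opNorm_zero) zero_le_one, rfl⟩)
  -- pointwise bound by deltaVBase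
  have hmem : ∀ x : (Fin (mr n r) × Fin s) → Pt n, (∀ j, x j ∈ K) →
      ‖d x‖ ≤ deltaVBase s K w hw r B := by
    intro x hx
    set T : (Fin (mr n r) × Fin s) → (C(↥K, Vec s) →L[ℂ] ℂ) := fun j =>
      LinearMap.mkContinuous
        { toFun := fun g => (inner ℂ (v (x j)) (g ⟨x j, hx j⟩) : ℂ)
          map_add' := fun g h => by simp [inner_add_right]
          map_smul' := fun c g => by simp [inner_smul_right] }
        1 (fun g => by
          simp only [LinearMap.coe_mk, AddHom.coe_mk, one_mul]
          calc ‖(inner ℂ (v (x j)) (g ⟨x j, hx j⟩) : ℂ)‖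
              ≤ ‖v (x j)‖ * ‖g ⟨x j, hx j⟩‖ := norm_inner_le_norm _ _
            _ ≤ 1 * ‖g‖ := mul_le_mul (hvle _ (hx j)) (g.norm_coe_le_norm _)
                (norm_nonneg _) zero_le_one
            _ = ‖g‖ := one_mul _) with hT
    exact le_csSup hbdd ⟨T, fun j => LinearMap.mkContinuous_norm_le _ zero_le_one _, rfl⟩
  -- Key integral bound
  have hkey : ∀ C : ℝ, 0 ≤ C → (∀ x : (Fin (mr n r) × Fin s) → Pt n,
        (∀ j, x j ∈ K) → ‖d x‖ ^ 2 ≤ C) →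
      ‖(Zfun s K μ v w r (mr n r) B)‖ ≤ C * (μ K).toReal ^ (s * mr n r) := by
    intro C hC0 hC
    haveI hPfin : IsFiniteMeasure
        (Measure.pi fun _ : Fin (mr n r) × Fin s => μ.restrict K) := by
      refine ⟨?_⟩
      rw [Measure.pi_univ]
      exact ENNReal.prod_lt_top fun _ _ => measure_lt_top _ _
    have hae : ∀ᵐ x ∂(Measure.pi fun _ : Fin (mr n r) × Fin s => μ.restrict K),
        ∀ j, x j ∈ K := by
      have hSm : MeasurableSet (Set.pi Set.univ fun _ : Fin (mr n r) × Fin s => K) :=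
        MeasurableSet.univ_pi fun _ => hK.isClosed.measurableSet
      have hPS : (Measure.pi fun _ : Fin (mr n r) × Fin s => μ.restrict K)
            (Set.pi Set.univ fun _ => K)
          = (Measure.pi fun _ : Fin (mr n r) × Fin s => μ.restrict K) Set.univ := by
        rw [Measure.pi_pi, Measure.pi_univ]
        exact Finset.prod_congr rfl fun _ _ => by
          rw [Measure.restrict_apply_self, Measure.restrict_apply_univ]
      have hcompl : (Measure.pi fun _ : Fin (mr n r) × Fin s => μ.restrict K)
          (Set.pi Set.univ fun _ => K)ᶜ = 0 := by
        rw [measure_compl hSm (measure_ne_top _ _), hPS, tsub_self]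
      refine MeasureTheory.ae_iff.mpr ?_
      have hset : {x : (Fin (mr n r) × Fin s) → Pt n | ¬ ∀ j, x j ∈ K}
          = (Set.pi Set.univ fun _ => K)ᶜ := by
        ext x; simp [Set.mem_pi]
      rw [hset]; exact hcompl
    have hb : ∀ᵐ x ∂(Measure.pi fun _ : Fin (mr n r) × Fin s => μ.restrict K),
        ‖(∑ σ : Equiv.Perm (Fin (mr n r) × Fin s), ∑ τ : Equiv.Perm (Fin (mr n r) × Fin s),
          ((Equiv.Perm.sign σ : ℤ) : ℂ) * ((Equiv.Perm.sign τ : ℤ) : ℂ) *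
          ∏ j, gval v (x j) (wodot w r (qb B (σ j)) (x j)) (wodot w r (qb B (τ j)) (x j)))‖
        ≤ C := by
      filter_upwards [hae] with x hx
      rw [h1 x, norm_mul, Complex.norm_conj, ← sq]
      exact hC x hx
    have hint := norm_integral_le_of_norm_le_const hb
    calc ‖(Zfun s K μ v w r (mr n r) B)‖
        = ‖∫ x : (Fin (mr n r) × Fin s) → Pt n,
            (∑ σ : Equiv.Perm (Fin (mr n r) × Fin s), ∑ τ : Equiv.Perm (Fin (mr n r) × Fin s),
              ((Equiv.Perm.sign σ : ℤ) : ℂ) * ((Equiv.Perm.sign τ : ℤ) : ℂ) *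
              ∏ j, gval v (x j) (wodot w r (qb B (σ j)) (x j)) (wodot w r (qb B (τ j)) (x j)))
            ∂(Measure.pi fun _ => μ.restrict K)‖ := rfl
      _ ≤ C * ((Measure.pi fun _ : Fin (mr n r) × Fin s => μ.restrict K) Set.univ).toReal :=
          hint
      _ = C * (μ K).toReal ^ (s * mr n r) := by
          congr 1
          rw [Measure.pi_univ]
          simp only [Measure.restrict_apply_univ]
          rw [Finset.prod_const, ENNReal.toReal_pow]
          congr 1
          simp [Finset.card_univ, mul_comm]
  rcases Nat.eq_zero_or_pos (lr n r) with hlr | hlr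
  · -- the case ℓ_r = 0, forcing r = 0 ; use Hadamard's bound
    have hr0 : r = 0 := by
      by_contra hr
      have hr1 : 1 ≤ r := Nat.one_le_iff_ne_zero.mpr hr
      have h0 : mr n 0 = 1 := by simp [mr]
      have h1' : mr n 1 = n + 1 := by
        show (n + 1).choose n = n + 1
        exact Nat.choose_succ_self_right n
      have hle := Finset.single_le_sum
        (f := fun k => k * (mr n k - mr n (k - 1)))
        (fun k _ => Nat.zero_le _) (Finset.mem_Icc.mpr ⟨le_refl 1, hr1⟩)
      have hlrdef : lr n r = ∑ k ∈ Finset.Icc 1 r, k * (mr n k - mr n (k - 1)) := rfl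
      rw [hlrdef] at hlr
      simp only [one_mul, show (1:ℕ) - 1 = 0 from rfl] at hle
      omega
    subst hr0
    refine le_trans (hkey 1 zero_le_one ?_) ?_
    · -- Hadamard bound : |d x|² ≤ 1
      intro x hx
      have hBz : ∀ l, B l = fun _ => 0 := by
        intro l
        funext j
        have h := hB.2.1 l
        exact Finset.sum_eq_zero_iff.mp (Nat.le_zero.mp h) j (Finset.mem_univ j)
      have hwod : ∀ (k : Fin (mr n 0) × Fin s) (y : Pt n),
          wodot w 0 (qb B k) y = EuclideanSpace.single k.2 (1 : ℂ) := by
        intro k y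
        ext i
        show ((w y i : ℂ)) ^ 0 * qb B k y i = _
        rw [pow_zero, one_mul]
        unfold qb mono
        rw [hBz k.1]
        simp
      have hentry : ∀ (j k : Fin (mr n 0) × Fin s),
          (inner ℂ (v (x j)) (wodot w 0 (qb B k) (x j)) : ℂ) = conj (v (x j) k.2) := by
        intro j k
        rw [hwod k (x j)]
        simpa using EuclideanSpace.inner_single_right k.2 (1 : ℂ) (v (x j))
      have habs : ‖d x‖ ≤ 1 := by
        simp only [hd]
        refine det_abs_le_one_of_rows _ fun j => ?_
        have hcong : ∀ k : Fin (mr n 0) × Fin s,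
            Complex.normSq ((Matrix.of (fun j k : Fin (mr n 0) × Fin s =>
              (inner ℂ (v (x j)) (wodot w 0 (qb B k) (x j)) : ℂ))) j k)
            = Complex.normSq (v (x j) k.2) := fun k => by
          rw [Matrix.of_apply, hentry j k, Complex.normSq_conj]
        rw [Finset.sum_congr rfl fun k _ => hcong k]
        have hnorm : ∑ i : Fin s, Complex.normSq (v (x j) i) ≤ 1 := by
          have h1' : Real.sqrt (∑ i, ‖v (x j) i‖ ^ 2) ≤ 1 := by
            rw [← EuclideanSpace.norm_eq]; exact hvle _ (hx j)
          have h2 : ∑ i, ‖v (x j) i‖ ^ 2 ≤ 1 := by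
            nlinarith [Real.sq_sqrt (show (0:ℝ) ≤ ∑ i, ‖v (x j) i‖ ^ 2 by positivity),
              Real.sqrt_nonneg (∑ i, ‖v (x j) i‖ ^ 2)]
          calc ∑ i : Fin s, Complex.normSq (v (x j) i)
              = ∑ i : Fin s, ‖v (x j) i‖ ^ 2 := Finset.sum_congr rfl fun i _ => by
                rw [← Complex.sq_norm]
            _ ≤ 1 := h2
        calc ∑ k : Fin (mr n 0) × Fin s, Complex.normSq (v (x j) k.2)
            = ∑ l : Fin (mr n 0), ∑ i : Fin s, Complex.normSq (v (x j) i) :=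
              Fintype.sum_prod_type (f := fun k : Fin (mr n 0) × Fin s =>
                Complex.normSq (v (x j) k.2))
          _ = ∑ i : Fin s, Complex.normSq (v (x j) i) := by
              rw [Finset.sum_const]
              have hm : mr n 0 = 1 := by simp [mr]
              simp [Finset.card_univ, hm]
          _ ≤ 1 := hnorm
      calc ‖d x‖ ^ 2 ≤ 1 ^ 2 :=
            pow_le_pow_left₀ (norm_nonneg _) habs 2
        _ = 1 := one_pow 2
    · have hlrz : lr n 0 = 0 := by simp [lr]
      rw [hlrz, mul_zero, pow_zero, one_mul, mul_one]
  · -- the case ℓ_r > 0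
    have hsne : (s : ℝ) ≠ 0 := Nat.cast_ne_zero.mpr (Nat.pos_iff_ne_zero.mp hs)
    have hlne : ((lr n r : ℕ) : ℝ) ≠ 0 := Nat.cast_ne_zero.mpr (Nat.pos_iff_ne_zero.mp hlr)
    refine le_trans (hkey ((deltaVBase s K w hw r B) ^ 2) (by positivity)
      (fun x hx => pow_le_pow_left₀ (norm_nonneg _) (hmem x hx) 2)) ?_
    rw [mul_comm]
    have hpow : (deltaV s K w hw r B) ^ (2 * s * lr n r)
        = (deltaVBase s K w hw r B) ^ 2 := by
      unfold deltaV
      rw [← Real.rpow_natCast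
        ((deltaVBase s K w hw r B) ^ (((s * lr n r : ℕ) : ℝ))⁻¹) (2 * s * lr n r)]
      rw [← Real.rpow_mul hD0]
      rw [show (((s * lr n r : ℕ) : ℝ))⁻¹ * ((2 * s * lr n r : ℕ) : ℝ) = ((2:ℕ):ℝ) by
        push_cast
        field_simp]
      rw [Real.rpow_natCast]
    rw [hpow]
end
end

section
/- Let K ⊆ ℂⁿ be compact and w = (w₁,…,w_s) a continuous weight. For each r ∈ ℕ and each l = 1,…,s let μ_l^{(r)} be a finite Borel measure on K whose seminorm is a norm on 𝒫_{r,n}ℂ, with the supports of μ_1^{(r)},…,μ_s^{(r)} pairwise disjoint, and assume the scalar weighted Bernstein–Markov property: for each l, limsup_{r→∞} ( sup over nonzero p ∈ 𝒫_{r,n}ℂ of (sup_{x∈K}|p(x)|w_l(x)^r) / (∫_K |p|² w_l^{2r} dμ_l^{(r)})^{1/2} )^{1/r} ≤ 1. Define μ^{(r)} := (1/s)·Σ_{l=1}^{s} μ_l^{(r)} and let v^{(r)} : K → ℂˢ be any Borel function with v^{(r)}(x) = e_l for x in the support of μ_l^{(r)}. Then the vector weighted Bernstein–Markov property holds: limsup_{r→∞}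 M_r(K,w,v^{(r)},μ^{(r)})^{1/r} ≤ 1. -/
open MeasureTheory Filter Topology
open scoped BigOperators ComplexConjugate ENNReal NNReal

noncomputable section

/-- The squared seminorm ‖f‖²_{v,μ} = ∫_K |⟨v(x),f(x)⟩|² dμ(x). -/
def vnormSq {n s : ℕ} (K : Set (Pt n)) (μ : Measure (Pt n)) (v : Pt n → Vec s)
    (f : Pt n → Vec s) : ℝ :=
  ∫ x in K, Complex.normSq (inner ℂ (v x) (f x) : ℂ) ∂μ

/-- The weighted Bernstein–Markov constant M_r(K,w,v,μ). -/
def Mr {n : ℕ} (s : ℕ) (K : Set (Pt n)) (μ : Measure (Pt n)) (v : Pt n → Vec s)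
    (w : Pt n → Fin s → ℝ) (r m : ℕ) (B : Fin m → Fin n → ℕ) : ℝ :=
  sSup {t : ℝ | ∃ c : Fin m × Fin s → ℂ, (∃ y, poly B c y ≠ 0) ∧
    t = sSup {y : ℝ | ∃ x ∈ K, y = ‖wodot w r (poly B c) x‖} /
        Real.sqrt (vnormSq K μ v (wodot w r (poly B c)))}

/-- The scalar weighted Bernstein–Markov constant for the weight wl and measure μ. -/
def MrS {n : ℕ} (K : Set (Pt n)) (μ : Measure (Pt n)) (wl : Pt n → ℝ) (r m : ℕ)
    (B : Fin m → Fin n → ℕ) : ℝ :=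
  sSup {t : ℝ | ∃ c : Fin m → ℂ, (∃ y, spoly B c y ≠ 0) ∧
    t = sSup {y : ℝ | ∃ x ∈ K, y = ‖spoly B c x‖ * wl x ^ r} /
        Real.sqrt (∫ x in K, Complex.normSq (spoly B c x) * (wl x ^ r) ^ 2 ∂μ)}


-- aux lemma tests
lemma poly_apply {n s m : ℕ} (B : Fin m → Fin n → ℕ) (c : Fin m × Fin s → ℂ) (x : Pt n)
    (l : Fin s) : poly B c x l = spoly B (fun j => c (j, l)) x := rfl

lemma wodot_apply {n s : ℕ} (w : Pt n → Fin s → ℝ) (r : ℕ) (f : Pt n → Vec s) (x : Pt n)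
    (l : Fin s) : wodot w r f x l = ((w x l : ℂ) ^ r) * f x l := rfl

lemma continuous_spoly {n m : ℕ} (B : Fin m → Fin n → ℕ) (c : Fin m → ℂ) :
    Continuous (spoly B c) := by
  unfold spoly mono
  exact continuous_finset_sum _ fun l _ => continuous_const.mul
    (continuous_finset_prod _ fun i _ => (continuous_apply i).pow _)

lemma set_eq_image {α : Type*} (K : Set α) (g : α → ℝ) :
    {y : ℝ | ∃ x ∈ K, y = g x} = g '' K := by
  ext y; exact ⟨fun ⟨x,hx,hy⟩ => ⟨x,hx,hy.symm⟩, fun ⟨x,hx,hy⟩ => ⟨x,hx,hy.symm⟩⟩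

example {n : ℕ} (K : Set (Pt n)) (hK : IsCompact K) : MeasurableSet K := hK.isClosed.measurableSet

lemma Veq {n s : ℕ} (hs : 0 < s) {K : Set (Pt n)} (hK : IsCompact K)
    {w : Pt n → Fin s → ℝ} (hw : ContinuousOn (fun x => w x) K)
    {r : ℕ} {μl : Fin s → Measure (Pt n)} (hfin : ∀ l, IsFiniteMeasure (μl l))
    {S : Fin s → Set (Pt n)} (hconc : ∀ l, μl l (S l)ᶜ = 0)
    {v : Pt n → Vec s} (hv : ∀ l : Fin s, ∀ x ∈ S l, v x = EuclideanSpace.single l 1)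
    {m : ℕ} (B : Fin m → Fin n → ℕ) (c : Fin m × Fin s → ℂ) :
    vnormSq K (((s : ℝ≥0∞))⁻¹ • ∑ l : Fin s, μl l) v (wodot w r (poly B c))
      = (s : ℝ)⁻¹ * ∑ l : Fin s, ∫ x in K,
          Complex.normSq (spoly B (fun j => c (j, l)) x) * (w x l ^ r) ^ 2 ∂(μl l) := by
  haveI := hfin
  have hKm : MeasurableSet K := hK.isClosed.measurableSet
  -- the integrand
  set f := wodot w r (poly B c) with hf
  set g : Pt n → ℝ := fun x => Complex.normSq (inner ℂ (v x) (f x) : ℂ) with hg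
  -- target integrands
  set h : Fin s → Pt n → ℝ :=
    fun l x => Complex.normSq (spoly B (fun j => c (j, l)) x) * (w x l ^ r) ^ 2 with hh
  have hae : ∀ l : Fin s, g =ᵐ[(μl l).restrict K] h l := by
    intro l
    have h1 : ∀ᵐ x ∂(μl l).restrict K, x ∈ S l :=
      Filter.Eventually.filter_mono (ae_mono Measure.restrict_le_self)
        ((MeasureTheory.ae_iff).2 (by exact hconc l))
    filter_upwards [h1] with x hx
    have hvx : v x = EuclideanSpace.single l 1 := hv l x hx
    have : (inner ℂ (v x) (f x) : ℂ) = f x l := by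
      rw [hvx, EuclideanSpace.inner_single_left]; simp
    rw [hg]; simp only [this]
    have : f x l = ((w x l : ℂ)) ^ r * spoly B (fun j => c (j, l)) x := rfl
    rw [this, Complex.normSq_mul, ← Complex.ofReal_pow, Complex.normSq_ofReal]
    ring
  have hcont : ∀ l : Fin s, ContinuousOn (h l) K := by
    intro l
    apply ContinuousOn.mul
    · exact ((Complex.continuous_normSq).comp (continuous_spoly B _)).continuousOn
    · exact (((continuous_apply l).comp_continuousOn hw).pow r).pow 2
  have hint : ∀ l : Fin s, IntegrableOn (h l) K (μl l) :=
    fun l => (hcont l).integrableOn_compact hK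
  have hgint : ∀ l : Fin s, Integrable g ((μl l).restrict K) :=
    fun l => (hint l).congr (hae l).symm
  rw [vnormSq]
  rw [Measure.restrict_smul, integral_smul_measure]
  have hrs : (∑ l : Fin s, μl l).restrict K = ∑ l : Fin s, (μl l).restrict K :=
    map_sum (Measure.restrictₗ K) μl Finset.univ
  rw [hrs, integral_finset_sum_measure (fun l _ => hgint l)]
  have : ((s : ℝ≥0∞))⁻¹.toReal = (s : ℝ)⁻¹ := by
    simp
  rw [this, smul_eq_mul]
  congr 1
  exact Finset.sum_congr rfl fun l _ => integral_congr_ae (hae l)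

lemma MrS_nonneg {n : ℕ} {K : Set (Pt n)} (μ : Measure (Pt n)) {wl : Pt n → ℝ}
    (hwl : ∀ x ∈ K, 0 ≤ wl x) (r m : ℕ) (B : Fin m → Fin n → ℕ) :
    0 ≤ MrS K μ wl r m B := by
  apply Real.sSup_nonneg
  rintro t ⟨c, -, rfl⟩
  apply div_nonneg _ (Real.sqrt_nonneg _)
  apply Real.sSup_nonneg
  rintro y ⟨x, hx, rfl⟩
  exact mul_nonneg (norm_nonneg _) (pow_nonneg (hwl x hx) r)

lemma wI_pos {n : ℕ} {K : Set (Pt n)} (hK : IsCompact K) (hKne : K.Nonempty)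
    {wl : Pt n → ℝ} (hwl : ContinuousOn wl K) (hwlpos : ∀ x ∈ K, 0 < wl x)
    {μ : Measure (Pt n)} [IsFiniteMeasure μ] {m : ℕ} {B : Fin m → Fin n → ℕ} {c : Fin m → ℂ}
    (r : ℕ)
    (hpos : 0 < ∫ x in K, Complex.normSq (spoly B c x) ∂μ) :
    0 < ∫ x in K, Complex.normSq (spoly B c x) * (wl x ^ r) ^ 2 ∂μ := by
  have hKm : MeasurableSet K := hK.isClosed.measurableSet
  obtain ⟨z, hz, hmin⟩ := hK.exists_isMinOn hKne hwl
  have hδ : 0 < wl z := hwlpos z hz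
  have hmono : ∀ x ∈ K, (wl z ^ r) ^ 2 * Complex.normSq (spoly B c x)
      ≤ Complex.normSq (spoly B c x) * (wl x ^ r) ^ 2 := by
    intro x hx
    rw [mul_comm]
    apply mul_le_mul_of_nonneg_left _ (Complex.normSq_nonneg _)
    have : wl z ≤ wl x := hmin hx
    have h1 : wl z ^ r ≤ wl x ^ r := pow_le_pow_left₀ hδ.le this r
    exact pow_le_pow_left₀ (pow_nonneg hδ.le r) h1 2
  have hint1 : IntegrableOn (fun x => (wl z ^ r) ^ 2 * Complex.normSq (spoly B c x)) K μ := by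
    apply ContinuousOn.integrableOn_compact hK
    exact (continuous_const.mul ((Complex.continuous_normSq).comp (continuous_spoly B c))).continuousOn
  have hint2 : IntegrableOn (fun x => Complex.normSq (spoly B c x) * (wl x ^ r) ^ 2) K μ := by
    apply ContinuousOn.integrableOn_compact hK
    exact (((Complex.continuous_normSq).comp (continuous_spoly B c)).continuousOn).mul
      ((hwl.pow r).pow 2)
  have := setIntegral_mono_on hint1 hint2 hKm hmono
  calc (0:ℝ) < (wl z ^ r) ^ 2 * ∫ x in K, Complex.normSq (spoly B c x) ∂μ := by positivity
    _ = ∫ x in K, (wl z ^ r) ^ 2 * Complex.normSq (spoly B c x) ∂μ := (integral_const_mul _ _).symm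
    _ ≤ _ := this

lemma scalar_bound {n : ℕ} {K : Set (Pt n)} (hK : IsCompact K) (hKne : K.Nonempty)
    {wl : Pt n → ℝ} (hwl : ContinuousOn wl K) (hwlpos : ∀ x ∈ K, 0 < wl x)
    {μ : Measure (Pt n)} [IsFiniteMeasure μ] {m : ℕ} {B : Fin m → Fin n → ℕ} (c : Fin m → ℂ)
    (r : ℕ)
    (hdet : (∃ y, spoly B c y ≠ 0) → 0 < ∫ x in K, Complex.normSq (spoly B c x) ∂μ)
    (hbdd : BddAbove {t : ℝ | ∃ c : Fin m → ℂ, (∃ y, spoly B c y ≠ 0) ∧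
      t = sSup {y : ℝ | ∃ x ∈ K, y = ‖spoly B c x‖ * wl x ^ r} /
          Real.sqrt (∫ x in K, Complex.normSq (spoly B c x) * (wl x ^ r) ^ 2 ∂μ)})
    {x : Pt n} (hx : x ∈ K) :
    ‖spoly B c x‖ * wl x ^ r
      ≤ MrS K μ wl r m B *
        Real.sqrt (∫ x in K, Complex.normSq (spoly B c x) * (wl x ^ r) ^ 2 ∂μ) := by
  by_cases hz : ∀ y, spoly B c y = 0
  · rw [hz x]
    simp only [norm_zero, zero_mul]
    exact mul_nonneg (MrS_nonneg μ (fun x hx => (hwlpos x hx).le) r m B) (Real.sqrt_nonneg _)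
  push_neg at hz
  have hI : 0 < ∫ x in K, Complex.normSq (spoly B c x) * (wl x ^ r) ^ 2 ∂μ :=
    wI_pos hK hKne hwl hwlpos r (hdet hz)
  set I := ∫ x in K, Complex.normSq (spoly B c x) * (wl x ^ r) ^ 2 ∂μ
  set A := sSup {y : ℝ | ∃ x ∈ K, y = ‖spoly B c x‖ * wl x ^ r} with hA
  have himg : {y : ℝ | ∃ x ∈ K, y = ‖spoly B c x‖ * wl x ^ r}
      = (fun x => ‖spoly B c x‖ * wl x ^ r) '' K := set_eq_image K _
  have hAbdd : BddAbove {y : ℝ | ∃ x ∈ K, y = ‖spoly B c x‖ * wl x ^ r} := by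
    rw [himg]
    exact (hK.image_of_continuousOn
      (((continuous_norm.comp (continuous_spoly B c)).continuousOn).mul
        (hwl.pow r))).bddAbove
  have hle : ‖spoly B c x‖ * wl x ^ r ≤ A :=
    le_csSup hAbdd ⟨x, hx, rfl⟩
  have ht : A / Real.sqrt I ≤ MrS K μ wl r m B := le_csSup hbdd ⟨c, hz, rfl⟩
  have hsq : 0 < Real.sqrt I := Real.sqrt_pos.2 hI
  calc ‖spoly B c x‖ * wl x ^ r ≤ A := hle
    _ = (A / Real.sqrt I) * Real.sqrt I := by field_simp
    _ ≤ MrS K μ wl r m B * Real.sqrt I :=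
        mul_le_mul_of_nonneg_right ht hsq.le

lemma caseB {n s : ℕ} (hs : 0 < s) {K : Set (Pt n)} (hK : IsCompact K)
    {w : Pt n → Fin s → ℝ} (hw : ContinuousOn (fun x => w x) K)
    (hwpos : ∀ x ∈ K, ∀ i, 0 < w x i)
    {r : ℕ} {μl : Fin s → Measure (Pt n)} (hfin : ∀ l, IsFiniteMeasure (μl l))
    {S : Fin s → Set (Pt n)} (hconc : ∀ l, μl l (S l)ᶜ = 0)
    {v : Pt n → Vec s} (hv : ∀ l : Fin s, ∀ x ∈ S l, v x = EuclideanSpace.single l 1)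
    {m : ℕ} (B : Fin m → Fin n → ℕ) (l₀ : Fin s)
    (hnb : ¬ BddAbove {t : ℝ | ∃ c : Fin m → ℂ, (∃ y, spoly B c y ≠ 0) ∧
      t = sSup {y : ℝ | ∃ x ∈ K, y = ‖spoly B c x‖ * w x l₀ ^ r} /
          Real.sqrt (∫ x in K, Complex.normSq (spoly B c x) * (w x l₀ ^ r) ^ 2 ∂(μl l₀))}) :
    ¬ BddAbove {t : ℝ | ∃ c : Fin m × Fin s → ℂ, (∃ y, poly B c y ≠ 0) ∧
      t = sSup {y : ℝ | ∃ x ∈ K, y = ‖wodot w r (poly B c) x‖} /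
          Real.sqrt (vnormSq K (((s : ℝ≥0∞))⁻¹ • ∑ l : Fin s, μl l) v
            (wodot w r (poly B c)))} := by
  intro hb
  obtain ⟨b, hbmem⟩ := hb
  apply hnb
  refine ⟨max b 0, ?_⟩
  rintro t ⟨c, hz, rfl⟩
  set I := ∫ x in K, Complex.normSq (spoly B c x) * (w x l₀ ^ r) ^ 2 ∂(μl l₀) with hI
  set A := sSup {y : ℝ | ∃ x ∈ K, y = ‖spoly B c x‖ * w x l₀ ^ r} with hA
  by_cases htpos : A / Real.sqrt I ≤ 0
  · exact le_trans htpos (le_max_right _ _)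
  push_neg at htpos
  have hsqI : 0 < Real.sqrt I := by
    rcases lt_or_ge 0 (Real.sqrt I) with h | h
    · exact h
    · exfalso
      have h0 : Real.sqrt I = 0 := le_antisymm h (Real.sqrt_nonneg _)
      rw [h0, div_zero] at htpos; exact lt_irrefl _ htpos
  have hIpos : 0 < I := by
    by_contra h
    push_neg at h
    rw [Real.sqrt_eq_zero_of_nonpos h] at hsqI; exact lt_irrefl _ hsqI
  have hApos : 0 < A := by
    have h := mul_pos htpos hsqI
    rwa [div_mul_cancel₀ _ hsqI.ne'] at h
  -- build the vector coefficient
  set c' : Fin m × Fin s → ℂ := fun j => if j.2 = l₀ then c j.1 else 0 with hc'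
  have hcomp0 : ∀ l : Fin s, l ≠ l₀ → (fun j => c' (j, l)) = (fun _ => (0 : ℂ)) := by
    intro l hl; funext j; simp [hc', hl]
  have hcompl : (fun j => c' (j, l₀)) = c := by funext j; simp [hc']
  -- pointwise norm identity
  have hnorm : ∀ x ∈ K, ‖wodot w r (poly B c') x‖
      = ‖spoly B c x‖ * w x l₀ ^ r := by
    intro x hx
    rw [EuclideanSpace.norm_eq]
    rw [Finset.sum_eq_single l₀]
    · have h1 : wodot w r (poly B c') x l₀ = ((w x l₀ : ℂ)) ^ r * spoly B c x := by
        rw [wodot_apply, poly_apply, hcompl]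
      rw [h1]
      rw [Real.sqrt_sq_eq_abs]
      rw [norm_mul, abs_of_nonneg (by positivity)]
      rw [norm_pow, Complex.norm_real, Real.norm_eq_abs,
        abs_of_pos (hwpos x hx l₀)]
      rw [mul_comm]
    · intro l _ hl
      have h1 : wodot w r (poly B c') x l = 0 := by
        rw [wodot_apply, poly_apply, hcomp0 l hl]
        simp [spoly]
      rw [h1]; simp
    · intro h; exact absurd (Finset.mem_univ l₀) h
  -- numerator set equality
  have hsets : {y : ℝ | ∃ x ∈ K, y = ‖wodot w r (poly B c') x‖}
      = {y : ℝ | ∃ x ∈ K, y = ‖spoly B c x‖ * w x l₀ ^ r} := by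
    ext y
    constructor
    · rintro ⟨x, hx, rfl⟩; exact ⟨x, hx, (hnorm x hx)⟩
    · rintro ⟨x, hx, rfl⟩; exact ⟨x, hx, (hnorm x hx).symm⟩
  -- vnormSq computation
  have hV : vnormSq K (((s : ℝ≥0∞))⁻¹ • ∑ l : Fin s, μl l) v (wodot w r (poly B c'))
      = (s : ℝ)⁻¹ * I := by
    rw [Veq hs hK hw hfin hconc hv B c']
    congr 1
    rw [Finset.sum_eq_single l₀]
    · rw [hcompl]
    · intro l _ hl
      rw [hcomp0 l hl]
      simp [spoly]
    · intro h; exact absurd (Finset.mem_univ l₀) h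
  have hmem : A / Real.sqrt ((s : ℝ)⁻¹ * I) ∈ {t : ℝ | ∃ c : Fin m × Fin s → ℂ,
      (∃ y, poly B c y ≠ 0) ∧
      t = sSup {y : ℝ | ∃ x ∈ K, y = ‖wodot w r (poly B c) x‖} /
          Real.sqrt (vnormSq K (((s : ℝ≥0∞))⁻¹ • ∑ l : Fin s, μl l) v
            (wodot w r (poly B c)))} := by
    refine ⟨c', ?_, ?_⟩
    · obtain ⟨y, hy⟩ := hz
      refine ⟨y, fun h0 => hy ?_⟩
      have := congrFun (congrArg WithLp.ofLp h0) l₀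
      rw [poly_apply, hcompl] at this; simpa using this
    · rw [hsets, hV, hA]
  have hb1 : A / Real.sqrt ((s : ℝ)⁻¹ * I) ≤ b := hbmem hmem
  have hs1 : (1 : ℝ) ≤ s := by exact_mod_cast hs
  have hle : A / Real.sqrt I ≤ A / Real.sqrt ((s : ℝ)⁻¹ * I) := by
    apply div_le_div_of_nonneg_left hApos.le
    · apply Real.sqrt_pos.2
      positivity
    · apply Real.sqrt_le_sqrt
      calc (s : ℝ)⁻¹ * I ≤ 1 * I := by
            apply mul_le_mul_of_nonneg_right _ hIpos.le
            rw [inv_le_one_iff₀]; right; exact hs1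
        _ = I := one_mul I
  exact le_trans (le_trans hle hb1) (le_max_left _ _)

lemma caseA {n s : ℕ} (hs : 0 < s) {K : Set (Pt n)} (hK : IsCompact K) (hKne : K.Nonempty)
    {w : Pt n → Fin s → ℝ} (hw : ContinuousOn (fun x => w x) K)
    (hwpos : ∀ x ∈ K, ∀ i, 0 < w x i)
    {r : ℕ} {μl : Fin s → Measure (Pt n)} (hfin : ∀ l, IsFiniteMeasure (μl l))
    {S : Fin s → Set (Pt n)} (hconc : ∀ l, μl l (S l)ᶜ = 0)
    {v : Pt n → Vec s} (hv : ∀ l : Fin s, ∀ x ∈ S l, v x = EuclideanSpace.single l 1)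
    {m : ℕ} (B : Fin m → Fin n → ℕ)
    (hdet : ∀ l : Fin s, ∀ c : Fin m → ℂ, (∃ y, spoly B c y ≠ 0) →
      0 < ∫ x in K, Complex.normSq (spoly B c x) ∂(μl l))
    (hbdd : ∀ l : Fin s, BddAbove {t : ℝ | ∃ c : Fin m → ℂ, (∃ y, spoly B c y ≠ 0) ∧
      t = sSup {y : ℝ | ∃ x ∈ K, y = ‖spoly B c x‖ * w x l ^ r} /
          Real.sqrt (∫ x in K, Complex.normSq (spoly B c x) * (w x l ^ r) ^ 2 ∂(μl l))})
    {C : ℝ} (hC : 0 ≤ C)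
    (hMC : ∀ l : Fin s, MrS K (μl l) (fun x => w x l) r m B ≤ C) :
    Mr s K (((s : ℝ≥0∞))⁻¹ • ∑ l : Fin s, μl l) v w r m B ≤ s * C := by
  haveI := hfin
  have hKm : MeasurableSet K := hK.isClosed.measurableSet
  have hs1 : (1 : ℝ) ≤ s := by exact_mod_cast hs
  apply Real.sSup_le _ (by positivity)
  rintro t ⟨c, hz, rfl⟩
  set V := vnormSq K (((s : ℝ≥0∞))⁻¹ • ∑ l : Fin s, μl l) v (wodot w r (poly B c)) with hVdef
  have hVeq : V = (s : ℝ)⁻¹ * ∑ l : Fin s, ∫ x in K,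
      Complex.normSq (spoly B (fun j => c (j, l)) x) * (w x l ^ r) ^ 2 ∂(μl l) :=
    Veq hs hK hw hfin hconc hv B c
  set I : Fin s → ℝ := fun l => ∫ x in K,
      Complex.normSq (spoly B (fun j => c (j, l)) x) * (w x l ^ r) ^ 2 ∂(μl l) with hIdef
  have hInn : ∀ l, 0 ≤ I l := by
    intro l
    apply setIntegral_nonneg hKm
    intro x _
    exact mul_nonneg (Complex.normSq_nonneg _) (sq_nonneg _)
  have hV0 : 0 ≤ V := by
    rw [hVeq]
    exact mul_nonneg (by positivity) (Finset.sum_nonneg fun l _ => hInn l)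
  by_cases hsV : Real.sqrt V = 0
  · rw [hsV, div_zero]; positivity
  have hsVpos : 0 < Real.sqrt V := lt_of_le_of_ne (Real.sqrt_nonneg _) (Ne.symm hsV)
  rw [div_le_iff₀ hsVpos]
  apply Real.sSup_le _ (by positivity)
  rintro y ⟨x, hx, rfl⟩
  -- pointwise bound ‖f x‖ ≤ s * C * √V
  have hcomp : ∀ l : Fin s, ‖wodot w r (poly B c) x l‖ ≤ C * Real.sqrt (I l) := by
    intro l
    have h1 : ‖wodot w r (poly B c) x l‖
        = ‖spoly B (fun j => c (j, l)) x‖ * w x l ^ r := by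
      rw [wodot_apply, poly_apply]
      rw [norm_mul, norm_pow, Complex.norm_real, Real.norm_eq_abs,
        abs_of_pos (hwpos x hx l), mul_comm]
    rw [h1]
    calc ‖spoly B (fun j => c (j, l)) x‖ * w x l ^ r
        ≤ MrS K (μl l) (fun x => w x l) r m B * Real.sqrt (I l) :=
          scalar_bound hK hKne ((continuous_apply l).comp_continuousOn hw)
            (fun x hx => hwpos x hx l) (fun j => c (j, l)) r
            (hdet l _) (hbdd l) hx
      _ ≤ C * Real.sqrt (I l) :=
          mul_le_mul_of_nonneg_right (hMC l) (Real.sqrt_nonneg _)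
  have hnormsq : ‖wodot w r (poly B c) x‖ ^ 2 ≤ C ^ 2 * ((s : ℝ) * V) := by
    have hEuc : ‖wodot w r (poly B c) x‖ ^ 2 = ∑ l, ‖wodot w r (poly B c) x l‖ ^ 2 := by
      rw [EuclideanSpace.norm_eq, Real.sq_sqrt]
      exact Finset.sum_nonneg fun l _ => sq_nonneg _
    rw [hEuc]
    have hsum : ∑ l, ‖wodot w r (poly B c) x l‖ ^ 2 ≤ ∑ l, C ^ 2 * I l := by
      apply Finset.sum_le_sum
      intro l _
      calc ‖wodot w r (poly B c) x l‖ ^ 2 ≤ (C * Real.sqrt (I l)) ^ 2 := by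
            apply pow_le_pow_left₀ (norm_nonneg _) (hcomp l)
        _ = C ^ 2 * I l := by
            rw [mul_pow, Real.sq_sqrt (hInn l)]
    refine hsum.trans ?_
    rw [← Finset.mul_sum]
    apply mul_le_mul_of_nonneg_left _ (sq_nonneg C)
    have : (s : ℝ) * V = ∑ l, I l := by
      rw [hVeq, ← mul_assoc, mul_inv_cancel₀ (by positivity : (s:ℝ) ≠ 0), one_mul]
    rw [this]
  have hfinal : ‖wodot w r (poly B c) x‖ ≤ C * (s : ℝ) * Real.sqrt V := by
    have h2 : ‖wodot w r (poly B c) x‖ ^ 2 ≤ (C * (s : ℝ) * Real.sqrt V) ^ 2 := by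
      refine hnormsq.trans ?_
      rw [mul_pow, mul_pow, Real.sq_sqrt hV0]
      have : C ^ 2 * ((s:ℝ) * V) ≤ C ^ 2 * ((s:ℝ)^2 * V) := by
        apply mul_le_mul_of_nonneg_left _ (sq_nonneg C)
        apply mul_le_mul_of_nonneg_right _ hV0
        nlinarith
      linarith [this]
    have := Real.sqrt_le_sqrt h2
    rwa [Real.sqrt_sq (norm_nonneg _), Real.sqrt_sq (by positivity)] at this
  calc ‖wodot w r (poly B c) x‖ ≤ C * (s : ℝ) * Real.sqrt V := hfinal
    _ = (s : ℝ) * C * Real.sqrt V := by ring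

lemma Mr_nonneg {n s : ℕ} (K : Set (Pt n)) (μ : Measure (Pt n)) (v : Pt n → Vec s)
    (w : Pt n → Fin s → ℝ) (r m : ℕ) (B : Fin m → Fin n → ℕ) :
    0 ≤ Mr s K μ v w r m B := by
  apply Real.sSup_nonneg
  rintro t ⟨c, -, rfl⟩
  apply div_nonneg _ (Real.sqrt_nonneg _)
  apply Real.sSup_nonneg
  rintro y ⟨x, hx, rfl⟩
  exact norm_nonneg _

lemma Kne {n s : ℕ} (hs : 0 < s) {K : Set (Pt n)} {m : ℕ} {B : Fin m → Fin n → ℕ}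
    {r : ℕ} (hB : IsEnum r m B) {μ : Measure (Pt n)}
    (hdet : ∀ c : Fin m → ℂ, (∃ y, spoly B c y ≠ 0) →
      0 < ∫ x in K, Complex.normSq (spoly B c x) ∂μ) : K.Nonempty := by
  obtain ⟨l, hl⟩ := hB.2.2 (fun _ => 0) (by simp)
  have hsp : ∀ y, spoly B (Pi.single l 1) y = 1 := by
    intro y
    rw [spoly, Finset.sum_eq_single l]
    · simp [hl, mono]
    · intro j _ hj; simp [Pi.single_eq_of_ne hj]
    · intro h; exact absurd (Finset.mem_univ l) h
  have hpos := hdet (Pi.single l 1) ⟨fun _ => 0, by rw [hsp]; exact one_ne_zero⟩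
  rcases K.eq_empty_or_nonempty with h | h
  · rw [h] at hpos; simp at hpos
  · exact h

/-- a vector measure built from scalar Bernstein–Markov measures with pairwise
disjoint supports (with v = e_l on the support of μ_l) satisfies the vector weighted
Bernstein–Markov property. -/
theorem stmt10 {n s : ℕ} (hn : 0 < n) (hs : 0 < s)
    (K : Set (Pt n)) (hK : IsCompact K)
    (w : Pt n → Fin s → ℝ) (hw : ContinuousOn (fun x => w x) K)
    (hwpos : ∀ x ∈ K, ∀ i, 0 < w x i)
    (B : ∀ r : ℕ, Fin (mr n r) → Fin n → ℕ) (hB : ∀ r : ℕ, IsEnum r (mr n r) (B r))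
    (μl : ℕ → Fin s → Measure (Pt n)) (hfin : ∀ r l, IsFiniteMeasure (μl r l))
    (hdet : ∀ r : ℕ, ∀ l : Fin s, ∀ c : Fin (mr n r) → ℂ, (∃ y, spoly (B r) c y ≠ 0) →
      0 < ∫ x in K, Complex.normSq (spoly (B r) c x) ∂(μl r l))
    (S : ℕ → Fin s → Set (Pt n))
    (hconc : ∀ r l, μl r l (S r l)ᶜ = 0)
    (hdisj : ∀ r : ℕ, ∀ l₁ l₂ : Fin s, l₁ ≠ l₂ → Disjoint (S r l₁) (S r l₂))
    (v : ℕ → Pt n → Vec s)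
    (hv : ∀ r : ℕ, ∀ l : Fin s, ∀ x ∈ S r l, v r x = EuclideanSpace.single l 1)
    (hBMscalar : ∀ l : Fin s, ∀ ε > (0 : ℝ), ∀ᶠ r : ℕ in atTop,
      (MrS K (μl r l) (fun x => w x l) r (mr n r) (B r)) ^ ((r : ℝ)⁻¹) ≤ 1 + ε) :
    ∀ ε > (0 : ℝ), ∀ᶠ r : ℕ in atTop,
      (Mr s K (((s : ℝ≥0∞))⁻¹ • ∑ l : Fin s, μl r l) (v r) w r (mr n r) (B r)) ^ ((r : ℝ)⁻¹)
        ≤ 1 + ε := by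
  
  intro ε hε
  have hKne : K.Nonempty := Kne hs (hB 0) (hdet 0 ⟨0, hs⟩)
  set ε' := min 1 (ε / 3) with hε'def
  have hε' : 0 < ε' := lt_min one_pos (by linarith)
  have hε'1 : ε' ≤ 1 := min_le_left _ _
  have hε'3 : ε' ≤ ε / 3 := min_le_right _ _
  have hsq : (1 + ε') * (1 + ε') ≤ 1 + ε := by nlinarith
  have h1 : ∀ᶠ r : ℕ in atTop, ∀ l : Fin s,
      (MrS K (μl r l) (fun x => w x l) r (mr n r) (B r)) ^ ((r : ℝ)⁻¹) ≤ 1 + ε' :=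
    eventually_all.2 fun l => hBMscalar l ε' hε'
  have h2 : ∀ᶠ r : ℕ in atTop, (s : ℝ) ^ ((r : ℝ)⁻¹) ≤ 1 + ε' := by
    have hts : Tendsto (fun r : ℕ => (s : ℝ) ^ ((r : ℝ)⁻¹)) atTop (𝓝 1) := by
      have hc : ContinuousAt (fun y : ℝ => (s : ℝ) ^ y) 0 :=
        Real.continuousAt_const_rpow (by positivity : (s:ℝ) ≠ 0)
      have := hc.tendsto.comp tendsto_inv_atTop_nhds_zero_nat
      simpa [Real.rpow_zero, Function.comp_def] using this
    exact (hts.eventually (ge_mem_nhds (by linarith : (1:ℝ) < 1 + ε')))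
  have h3 : ∀ᶠ r : ℕ in atTop, 1 ≤ r := eventually_ge_atTop 1
  filter_upwards [h1, h2, h3] with r hr1 hr2 hr3
  haveI := hfin r
  have hrne : ((r : ℝ)) ≠ 0 := by positivity
  by_cases hbdd : ∀ l : Fin s, BddAbove {t : ℝ | ∃ c : Fin (mr n r) → ℂ,
      (∃ y, spoly (B r) c y ≠ 0) ∧
      t = sSup {y : ℝ | ∃ x ∈ K, y = ‖spoly (B r) c x‖ * w x l ^ r} /
          Real.sqrt (∫ x in K, Complex.normSq (spoly (B r) c x) * (w x l ^ r) ^ 2 ∂(μl r l))}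
  · -- bounded case
    set C : ℝ := (1 + ε') ^ r with hCdef
    have hC0 : (0:ℝ) ≤ C := by positivity
    have hMC : ∀ l : Fin s, MrS K (μl r l) (fun x => w x l) r (mr n r) (B r) ≤ C := by
      intro l
      have hM0 : 0 ≤ MrS K (μl r l) (fun x => w x l) r (mr n r) (B r) :=
        MrS_nonneg (μl r l) (fun x hx => (hwpos x hx l).le) r (mr n r) (B r)
      have := Real.rpow_le_rpow (Real.rpow_nonneg hM0 _) (hr1 l)
        (by positivity : (0:ℝ) ≤ (r : ℝ))
      rw [← Real.rpow_mul hM0, inv_mul_cancel₀ hrne, Real.rpow_one,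
        Real.rpow_natCast] at this
      exact this
    have hMr : Mr s K (((s : ℝ≥0∞))⁻¹ • ∑ l : Fin s, μl r l) (v r) w r (mr n r) (B r)
        ≤ s * C :=
      caseA hs hK hKne hw hwpos (hfin r) (hconc r) (hv r) (B r) (hdet r) hbdd hC0 hMC
    have hMr0 : 0 ≤ Mr s K (((s : ℝ≥0∞))⁻¹ • ∑ l : Fin s, μl r l) (v r) w r (mr n r) (B r) :=
      Mr_nonneg _ _ _ _ _ _ _
    calc (Mr s K (((s : ℝ≥0∞))⁻¹ • ∑ l : Fin s, μl r l) (v r) w r (mr n r) (B r)) ^ ((r : ℝ)⁻¹)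
        ≤ ((s : ℝ) * C) ^ ((r : ℝ)⁻¹) :=
          Real.rpow_le_rpow hMr0 hMr (by positivity)
      _ = (s : ℝ) ^ ((r : ℝ)⁻¹) * C ^ ((r : ℝ)⁻¹) :=
          Real.mul_rpow (by positivity) hC0
      _ = (s : ℝ) ^ ((r : ℝ)⁻¹) * (1 + ε') := by
          rw [hCdef, ← Real.rpow_natCast (1 + ε') r, ← Real.rpow_mul (by positivity),
            mul_inv_cancel₀ hrne, Real.rpow_one]
      _ ≤ (1 + ε') * (1 + ε') :=
          mul_le_mul_of_nonneg_right hr2 (by positivity)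
      _ ≤ 1 + ε := hsq
  · push_neg at hbdd
    obtain ⟨l₀, hnb⟩ := hbdd
    have := caseB hs hK hw hwpos (hfin r) (hconc r) (hv r) (B r) l₀ hnb
    have hMr0 : Mr s K (((s : ℝ≥0∞))⁻¹ • ∑ l : Fin s, μl r l) (v r) w r (mr n r) (B r) = 0 := by
      rw [Mr]
      exact Real.sSup_of_not_bddAbove this
    rw [hMr0, Real.zero_rpow (inv_ne_zero hrne)]
    linarith
end
end

section
/- Let K ⊆ ℂⁿ, w a weight, r ∈ ℕ, N = s·m_r. Let x₁,…,x_N ∈ K be pairwise distinct points and i : {1,…,N} → {1,…,s}, and define the functionals T_h(ω) := ω_{i(h)}(x_h) (the i(h)-th component of ω evaluated at x_h). If det[T_h(q_k ⊙ w^r)]_{h,k=1,…,N} ≠ 0, then for every l = 1,…,s the cardinality of {h ∈ {1,…,N} : i(h) = l} equals m_r. -/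
open MeasureTheory Filter Topology
open scoped BigOperators ComplexConjugate ENNReal NNReal

noncomputable section

/-- if the Vandermonde determinant of the point-mass functionals
T_h(ω) := ω_{i(h)}(x_h) is nonzero, then each direction l is used exactly m_r times. -/
theorem stmt11 {n s : ℕ} (hn : 0 < n) (hs : 0 < s)
    (K : Set (Pt n)) (w : Pt n → Fin s → ℝ)
    (r : ℕ) (B : Fin (mr n r) → Fin n → ℕ) (hB : IsEnum r (mr n r) B)
    (x : Fin (mr n r) × Fin s → Pt n) (hx : ∀ h, x h ∈ K)
    (hxinj : Function.Injective x)
    (i : Fin (mr n r) × Fin s → Fin s)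
    (hdet : Matrix.det (Matrix.of fun h k : Fin (mr n r) × Fin s =>
        wodot w r (qb B k) (x h) (i h)) ≠ 0) :
    ∀ l : Fin s, (Finset.univ.filter fun h : Fin (mr n r) × Fin s => i h = l).card = mr n r := by
  classical
  set M : Matrix (Fin (mr n r) × Fin s) (Fin (mr n r) × Fin s) ℂ :=
    Matrix.of (fun h k : Fin (mr n r) × Fin s => wodot w r (qb B k) (x h) (i h)) with hMdef
  have hzero : ∀ (h : Fin (mr n r) × Fin s) (l' : Fin (mr n r)) (j : Fin s), i h ≠ j → M h (l', j) = 0 := by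
    intro h l' j hne
    simp only [hMdef, Matrix.of_apply, wodot, WithLp.ofLp_toLp, qb, EuclideanSpace.single_apply, if_neg hne,
      mul_zero]
  have hunit : IsUnit M := (Matrix.isUnit_iff_isUnit_det M).2 hdet.isUnit
  have hcols : LinearIndependent ℂ (fun k : Fin (mr n r) × Fin s => fun h => M h k) :=
    Matrix.linearIndependent_cols_iff_isUnit.2 hunit
  have hge : ∀ l : Fin s, (mr n r) ≤ (Finset.univ.filter fun h : Fin (mr n r) × Fin s => i h = l).card := by
    intro l
    have hli : LinearIndependent ℂ (fun l' : Fin (mr n r) => fun h => M h (l', l)) := by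
      have hinj : Function.Injective (fun l' : Fin (mr n r) => ((l', l) : Fin (mr n r) × Fin s)) := by
        intro a b hab; exact (Prod.mk.injEq _ _ _ _ ▸ hab).1
      exact hcols.comp _ hinj
    have hres : LinearIndependent ℂ
        (fun l' : Fin (mr n r) => fun h : {h : Fin (mr n r) × Fin s // i h = l} => M h.1 (l', l)) := by
      rw [Fintype.linearIndependent_iff] at hli ⊢
      intro g hg
      apply hli g
      funext h
      by_cases hh : i h = l
      · have := congrFun hg ⟨h, hh⟩
        simpa using this
      · simp only [Finset.sum_apply, Pi.smul_apply, smul_eq_mul]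
        exact Finset.sum_eq_zero fun l' _ => by rw [hzero h l' l hh, mul_zero]
    have := hres.fintype_card_le_finrank
    simpa [Module.finrank_fintype_fun_eq_card, Fintype.card_subtype] using this
  have hsum : ∑ l : Fin s, (Finset.univ.filter fun h : Fin (mr n r) × Fin s => i h = l).card
      = (mr n r) * s := by
    rw [← Finset.card_eq_sum_card_fiberwise (fun h _ => Finset.mem_univ (i h))]
    simp [Finset.card_univ]
  intro l
  by_contra hne
  have hlt : (mr n r) < (Finset.univ.filter fun h : Fin (mr n r) × Fin s => i h = l).card :=
    lt_of_le_of_ne (hge l) (Ne.symm hne)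
  have : ∑ l : Fin s, (mr n r) < ∑ l : Fin s, (Finset.univ.filter fun h : Fin (mr n r) × Fin s => i h = l).card :=
    Finset.sum_lt_sum (fun l' _ => hge l') ⟨l, Finset.mem_univ l, hlt⟩
  rw [hsum] at this
  simp [mul_comm] at this
end
end

section
/- Let K ⊆ ℂⁿ be compact, w a continuous weight, ω ∈ C(K,ℝˢ), and w(x,t) := (w₁(x)e^{−tω₁(x)},…,w_s(x)e^{−tω_s(x)}). Let x₁,…,x_N ∈ K be pairwise distinct (N = s·m_r), i : {1,…,N} → {1,…,s}, μ := (1/N)·Σ_h δ_{x_h}, v(x_h) := e_{i(h)}. Then for all t ∈ ℝ: det G_r^{v,μ,w(·,t)} = exp(−2rt·Σ_{h=1}^{N} ω_{i(h)}(x_h)) · det G_r^{v,μ,w(·,0)}. Consequently, if det G_r^{v,μ,w(·,0)} > 0, then the function f_r(t) := −(n+1)/(2nrN)·log det G_r^{v,μ,w(·,t)} is affine (in particular concave) in t, with derivative f_r'(t) = (n+1)/(nN) · Σ_{h=1}^{N} ω_{i(h)}(x_h) for every t. -/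
open MeasureTheory Filter Topology
open scoped BigOperators ComplexConjugate ENNReal NNReal

noncomputable section

/-- The Gram matrix G_r^{v,μ,w}. -/
def Gmat {n : ℕ} (s : ℕ) (K : Set (Pt n)) (μ : Measure (Pt n)) (v : Pt n → Vec s)
    (w : Pt n → Fin s → ℝ) (r m : ℕ) (B : Fin m → Fin n → ℕ) :
    Matrix (Fin m × Fin s) (Fin m × Fin s) ℂ :=
  Matrix.of fun i j => ∫ x in K, gval v x (wodot w r (qb B i) x) (wodot w r (qb B j) x) ∂μ

/-- The varied weight w(x,t) := (w₁(x)e^{−tω₁(x)},…,w_s(x)e^{−tω_s(x)}). -/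
def wmod {n s : ℕ} (w ω : Pt n → Fin s → ℝ) (t : ℝ) : Pt n → Fin s → ℝ :=
  fun y j => w y j * Real.exp (-t * ω y j)



section Aux
open scoped Matrix
open Classical in
/-- Entry formula for Gmat with a finitely supported vector measure. -/
theorem gmat_eq {n s : ℕ} (K : Set (Pt n)) (hK : IsCompact K)
    (r m : ℕ) (B : Fin m → Fin n → ℕ)
    (x : Fin m × Fin s → Pt n) (hx : ∀ h, x h ∈ K)
    (i : Fin m × Fin s → Fin s)
    (v : Pt n → Vec s) (hvx : ∀ h, v (x h) = EuclideanSpace.single (i h) 1)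
    (μ : Measure (Pt n))
    (hμ : μ = ((s * m : ℕ) : ℝ≥0∞)⁻¹ • ∑ h : Fin m × Fin s, Measure.dirac (x h))
    (W : Pt n → Fin s → ℝ) :
    Gmat s K μ v W r m B = (((s * m : ℕ) : ℝ)⁻¹ : ℂ) •
      ((Matrix.of fun h p => wodot W r (qb B p) (x h) (i h))ᴴ *
        (Matrix.of fun h p => wodot W r (qb B p) (x h) (i h))) := by
  have hrestr : μ.restrict K = ((s * m : ℕ) : ℝ≥0∞)⁻¹ •
      ∑ h : Fin m × Fin s, Measure.dirac (x h) := by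
    rw [hμ, Measure.restrict_smul]
    congr 1
    rw [← Measure.restrictₗ_apply, map_sum]
    refine Finset.sum_congr rfl fun h _ => ?_
    rw [Measure.restrictₗ_apply, restrict_dirac' hK.isClosed.measurableSet, if_pos (hx h)]
  have hint : ∀ f : Pt n → ℂ, (∫ y in K, f y ∂μ) =
      (((s * m : ℕ) : ℝ)⁻¹ : ℂ) * ∑ h : Fin m × Fin s, f (x h) := by
    intro f
    rw [show (∫ y in K, f y ∂μ) = ∫ y, f y ∂(μ.restrict K) from rfl, hrestr,
      integral_smul_measure,
      integral_finset_sum_measure (fun h _ => (integrable_const (f (x h))).congr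
        (ae_eq_dirac f).symm)]
    simp [integral_dirac, Complex.real_smul]
  ext p q
  rw [show (Gmat s K μ v W r m B) p q =
      ∫ y in K, gval v y (wodot W r (qb B p) y) (wodot W r (qb B q) y) ∂μ from rfl, hint]
  simp only [Matrix.smul_apply, Matrix.mul_apply, Matrix.conjTranspose_apply,
    Matrix.of_apply, smul_eq_mul]
  congr 1
  refine Finset.sum_congr rfl fun h _ => ?_
  simp [gval, hvx h, EuclideanSpace.inner_single_left]
end Aux


open scoped Matrix in
/-- for vector point masses supported at the nodes, det G_r^{v,μ,w(·,t)} =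
e^{−2rt Σ ω_{i(h)}(x_h)} · det G_r^{v,μ,w(·,0)}; hence f_r is affine (in particular concave)
with constant derivative (n+1)/(nN) Σ_h ω_{i(h)}(x_h). -/
theorem stmt13 {n s : ℕ} (hn : 0 < n) (hs : 0 < s)
    (K : Set (Pt n)) (hK : IsCompact K)
    (w : Pt n → Fin s → ℝ) (hw : ContinuousOn (fun y => w y) K)
    (hwpos : ∀ y ∈ K, ∀ j, 0 < w y j)
    (ω : Pt n → Fin s → ℝ) (hω : ContinuousOn (fun y => ω y) K)
    (r : ℕ) (hr : 0 < r) (B : Fin (mr n r) → Fin n → ℕ) (hB : IsEnum r (mr n r) B)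
    (x : Fin (mr n r) × Fin s → Pt n) (hx : ∀ h, x h ∈ K)
    (hxinj : Function.Injective x)
    (i : Fin (mr n r) × Fin s → Fin s)
    (v : Pt n → Vec s) (hvx : ∀ h, v (x h) = EuclideanSpace.single (i h) 1)
    (μ : Measure (Pt n))
    (hμ : μ = ((s * mr n r : ℕ) : ℝ≥0∞)⁻¹ •
      ∑ h : Fin (mr n r) × Fin s, Measure.dirac (x h)) :
    (∀ t : ℝ, (Gmat s K μ v (wmod w ω t) r (mr n r) B).det =
        (Real.exp (-2 * r * t * ∑ h : Fin (mr n r) × Fin s, ω (x h) (i h)) : ℂ) *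
          (Gmat s K μ v w r (mr n r) B).det) ∧
    (0 < ((Gmat s K μ v w r (mr n r) B).det).re →
      (∀ t : ℝ, HasDerivAt
          (fun t' : ℝ => -((n + 1 : ℝ) / (2 * n * r * (s * mr n r))) *
            Real.log ((Gmat s K μ v (wmod w ω t') r (mr n r) B).det.re))
          ((n + 1 : ℝ) / (n * (s * mr n r)) *
            ∑ h : Fin (mr n r) × Fin s, ω (x h) (i h)) t) ∧
      ConcaveOn ℝ Set.univ
        (fun t' : ℝ => -((n + 1 : ℝ) / (2 * n * r * (s * mr n r))) *
          Real.log ((Gmat s K μ v (wmod w ω t') r (mr n r) B).det.re))) := by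
  classical
  set S : ℝ := ∑ h : Fin (mr n r) × Fin s, ω (x h) (i h) with hS
  set A : (Pt n → Fin s → ℝ) → Matrix (Fin (mr n r) × Fin s) (Fin (mr n r) × Fin s) ℂ :=
    fun W => Matrix.of fun h p => wodot W r (qb B p) (x h) (i h) with hAdef
  have hG : ∀ W, Gmat s K μ v W r (mr n r) B =
      (((s * mr n r : ℕ) : ℝ)⁻¹ : ℂ) • ((A W)ᴴ * A W) :=
    fun W => gmat_eq K hK r _ B x hx i v hvx μ hμ W
  have hA : ∀ t : ℝ, A (wmod w ω t) =
      Matrix.diagonal (fun h => ((Real.exp (-t * ω (x h) (i h)) ^ r : ℝ) : ℂ)) * A w := by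
    intro t
    ext h p
    simp only [hAdef, Matrix.of_apply, wodot, wmod, Matrix.diagonal_mul]
    push_cast
    ring
  have hdet : ∀ t : ℝ, (Gmat s K μ v (wmod w ω t) r (mr n r) B).det =
      (Real.exp (-2 * r * t * S) : ℂ) * (Gmat s K μ v w r (mr n r) B).det := by
    intro t
    have hP : (((∏ h : Fin (mr n r) × Fin s, Real.exp (-t * ω (x h) (i h)) ^ r : ℝ)) : ℂ) *
        (((∏ h : Fin (mr n r) × Fin s, Real.exp (-t * ω (x h) (i h)) ^ r : ℝ)) : ℂ) =
        ((Real.exp (-2 * r * t * S) : ℝ) : ℂ) := by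
      rw [← Complex.ofReal_mul]
      congr 1
      have h1 : ∀ h ∈ (Finset.univ : Finset (Fin (mr n r) × Fin s)),
          Real.exp (-t * ω (x h) (i h)) ^ r = Real.exp ((r : ℝ) * (-t * ω (x h) (i h))) :=
        fun h _ => (Real.exp_nat_mul _ r).symm
      rw [Finset.prod_congr rfl h1, ← Real.exp_sum, ← Real.exp_add]
      congr 1
      rw [hS, Finset.mul_sum, ← Finset.sum_add_distrib]
      exact Finset.sum_congr rfl fun h _ => by ring
    rw [hG, hG, hA t]
    simp only [Matrix.det_smul, Matrix.det_mul, Matrix.det_conjTranspose,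
      Matrix.det_diagonal, Matrix.conjTranspose_mul]
    simp only [Complex.ofReal_prod] at hP ⊢

    have hstar : star (∏ h : Fin (mr n r) × Fin s,
        ((Real.exp (-t * ω (x h) (i h)) ^ r : ℝ) : ℂ)) =
        ∏ h : Fin (mr n r) × Fin s, ((Real.exp (-t * ω (x h) (i h)) ^ r : ℝ) : ℂ) := by
      rw [← Complex.ofReal_prod, Complex.star_def, Complex.conj_ofReal]
    rw [hstar]
    linear_combination ((((s * mr n r : ℕ) : ℝ) : ℂ)⁻¹ ^
        Fintype.card (Fin (mr n r) × Fin s) * star (A w).det * (A w).det) * hP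
  refine ⟨fun t => hdet t, fun hpos => ?_⟩
  have hre : ∀ t : ℝ, (Gmat s K μ v (wmod w ω t) r (mr n r) B).det.re =
      Real.exp (-2 * r * t * S) * (Gmat s K μ v w r (mr n r) B).det.re := by
    intro t
    rw [hdet t, Complex.re_ofReal_mul]
  set c1 : ℝ := (n + 1 : ℝ) / (2 * n * r * (s * mr n r)) with hc1
  set C : ℝ := -c1 * Real.log ((Gmat s K μ v w r (mr n r) B).det.re) with hC
  have hfun : (fun t' : ℝ => -c1 *
      Real.log ((Gmat s K μ v (wmod w ω t') r (mr n r) B).det.re)) =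
      fun t' : ℝ => (2 * r * S * c1) * t' + C := by
    funext t'
    rw [hre t', Real.log_mul (Real.exp_ne_zero _) (ne_of_gt hpos), Real.log_exp, hC]
    ring
  have hmr : (0 : ℝ) < (mr n r : ℝ) := by
    exact_mod_cast Nat.choose_pos (Nat.le_add_right n r)
  have hn' : ((n : ℝ)) ≠ 0 := by positivity
  have hr' : ((r : ℝ)) ≠ 0 := by positivity
  have hs' : ((s : ℝ)) ≠ 0 := by positivity
  have hmr' : ((mr n r : ℝ)) ≠ 0 := ne_of_gt hmr
  constructor
  · intro t
    rw [hfun]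
    have hd := ((hasDerivAt_id t).const_mul (2 * r * S * c1)).add_const C
    refine hd.congr_deriv ?_
    rw [hc1]
    field_simp
  · rw [hfun]
    refine ⟨convex_univ, fun p _ q _ a b ha hb hab => ?_⟩
    simp only [smul_eq_mul]
    apply le_of_eq
    linear_combination C * hab
end
end
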